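/- A field L of characteristic p > 0 is p-closed (every polynomial X^{pⁿ} + a_{n-1}X^{p^{n-1}} + ⋯ + a₁X^p + a₀X + b over L has a root in L) if and only if L has no finite field extension of degree divisible by p. -/

import Mathlib

set_option linter.unusedSectionVars false
set_option maxHeartbeats 1000000

universe u

open Polynomial IntermediateField

theorem cast_pow_char {R : Type*} [CommRing R] {p : ℕ} [Fact (Nat.Prime p)] [CharP R p]
    (r : ℕ) : ((r : R)) ^ p = (r : R) := by
  induction r with
  | zero => rw [Nat.cast_zero, zero_pow (Fact.out : Nat.Prime p).ne_zero]
  | succ r ih => push_cast [add_pow_char, ih, one_pow]; ring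

variable {p : ℕ} {L : Type u}

section Aux
variable [Field L] [CharP L p]

/-- `p`-closedness of a field `L`. -/
def PC (p : ℕ) (L : Type u) [Field L] : Prop :=
  ∀ (n : ℕ) (a : Fin n → L) (b : L),
    ∃ x : L, x ^ p ^ n + (∑ i : Fin n, a i * x ^ p ^ (i : ℕ)) + b = 0

theorem PC.frobSurj (h : PC p L) (b : L) : ∃ x : L, x ^ p = b := by
  obtain ⟨x, hx⟩ := h 1 (fun _ => 0) (-b)
  refine ⟨x, ?_⟩
  simp only [pow_one, zero_mul, Finset.sum_const_zero, smul_zero] at hx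
  linear_combination hx

theorem PC.powRoot (h : PC p L) (m : ℕ) (b : L) : ∃ x : L, x ^ p ^ m = b := by
  induction m generalizing b with
  | zero => exact ⟨b, by simp⟩
  | succ m ih =>
    obtain ⟨y, hy⟩ := h.frobSurj b
    obtain ⟨x, hx⟩ := ih y
    exact ⟨x, by rw [pow_succ, pow_mul, hx, hy]⟩

theorem PC.nonmonic (h : PC p L) (n : ℕ) {lead : L} (hl : lead ≠ 0) (a : Fin n → L) (b : L) :
    ∃ z : L, lead * z ^ p ^ n + (∑ i : Fin n, a i * z ^ p ^ (i : ℕ)) + b = 0 := by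
  obtain ⟨lam, hlam⟩ := h.powRoot n lead⁻¹
  obtain ⟨x, hx⟩ := h n (fun i => a i * lam ^ p ^ (i : ℕ)) b
  refine ⟨lam * x, ?_⟩
  have h1 : lead * (lam * x) ^ p ^ n = x ^ p ^ n := by
    rw [mul_pow, hlam]
    field_simp
  have h2 : ∀ i : Fin n, a i * (lam * x) ^ p ^ (i : ℕ)
      = a i * lam ^ p ^ (i : ℕ) * x ^ p ^ (i : ℕ) := by
    intro i; rw [mul_pow]; ring
  rw [h1, Finset.sum_congr rfl (fun i _ => h2 i)]
  exact hx

theorem PC.lemB (h : PC p L) {k : ℕ} (hk : 0 < k) {β : ℕ → L} (hβ : β 0 ≠ 0) :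
    ∃ z : L, ∑ j ∈ Finset.range k, (β j) ^ p ^ (k - 1 - j) * z ^ p ^ (k - j) = z + 1 := by
  have hlead : (β 0) ^ p ^ (k - 1) ≠ 0 := pow_ne_zero _ hβ
  obtain ⟨z, hz⟩ := h.nonmonic k hlead
    (fun i => if (i : ℕ) = 0 then -1 else (β (k - (i : ℕ))) ^ p ^ ((i : ℕ) - 1)) (-1)
  refine ⟨z, ?_⟩
  -- rewrite the Fin sum as a range sum
  rw [Fin.sum_univ_eq_sum_range
    (fun i => (if i = 0 then -1 else (β (k - i)) ^ p ^ (i - 1)) * z ^ p ^ i) k] at hz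
  obtain ⟨k', rfl⟩ : ∃ k', k = k' + 1 := ⟨k - 1, (Nat.succ_pred_eq_of_pos hk).symm⟩
  rw [Finset.sum_range_succ'] at hz
  simp only [if_pos rfl, Nat.add_sub_cancel] at hz
  -- hz : lead * z ^ p ^ (k'+1) + (∑ i in range k', β (k' - i) ^ p ^ i * z ^ p ^ (i+1)) + -1 * z ^ p ^ 0 + -1 = 0
  rw [Finset.sum_range_succ']
  have e1 : ∀ j ∈ Finset.range k', (β (j + 1)) ^ p ^ (k' + 1 - 1 - (j + 1)) * z ^ p ^ (k' + 1 - (j + 1))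
      = (fun i => (β (k' - i)) ^ p ^ i * z ^ p ^ (i + 1)) (k' - 1 - j) := by
    intro j hj
    have hj' : j < k' := Finset.mem_range.mp hj
    simp only []
    have h1 : k' - (k' - 1 - j) = j + 1 := by omega
    have h2 : k' + 1 - 1 - (j + 1) = k' - 1 - j := by omega
    have h3 : k' + 1 - (j + 1) = (k' - 1 - j) + 1 := by omega
    rw [h1, h2, h3]
  rw [Finset.sum_congr rfl e1,
    Finset.sum_range_reflect (fun i => (β (k' - i)) ^ p ^ i * z ^ p ^ (i + 1)) k']
  have h0 : k' + 1 - 1 - 0 = k' := by omega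
  have h0' : k' + 1 - 0 = k' + 1 := by omega
  rw [h0, h0']
  have : ∀ i ∈ Finset.range k', (if i + 1 = 0 then (-1:L) else (β (k' + 1 - (i+1))) ^ p ^ i) * z ^ p ^ (i+1)
      = (β (k' - i)) ^ p ^ i * z ^ p ^ (i + 1) := by
    intro i hi
    have : k' + 1 - (i + 1) = k' - i := by omega
    simp [this]
  rw [Finset.sum_congr rfl this] at hz
  have hz0 : z ^ p ^ 0 = z := by rw [pow_zero, pow_one]
  rw [hz0] at hz
  rw [if_pos trivial] at hz
  linear_combination hz

theorem PC.asSurj (h : PC p L) (hp : p.Prime) (F : Type u) [Field F] [Algebra L F]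
    [FiniteDimensional L F] (c : F) : ∃ y : F, y ^ p - y = c := by
  haveI : Fact p.Prime := ⟨hp⟩
  haveI : CharP F p := charP_of_injective_algebraMap (algebraMap L F).injective p
  by_cases hc : c = 0
  · exact ⟨0, by simp [hc, zero_pow hp.ne_zero]⟩
  classical
  set P : ℕ → Prop :=
    fun k => c ^ p ^ k ∈ Submodule.span L (Set.range fun i : Fin k => c ^ p ^ (i : ℕ)) with hPdef
  have hex : ∃ k, P k := by
    by_contra hnone
    push_neg at hnone
    have hind : ∀ m : ℕ, LinearIndependent L (fun i : Fin m => c ^ p ^ (i : ℕ)) := by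
      intro m
      induction m with
      | zero => exact linearIndependent_empty_type
      | succ m ih =>
        have he : (fun i : Fin (m + 1) => c ^ p ^ (i : ℕ))
            = Fin.snoc (fun i : Fin m => c ^ p ^ (i : ℕ)) (c ^ p ^ m) := by
          funext i
          refine Fin.lastCases ?_ ?_ i
          · simp [Fin.snoc_last]
          · intro j; simp [Fin.snoc_castSucc]
        rw [he, linearIndependent_fin_snoc]
        exact ⟨ih, fun hmem => hnone m hmem⟩
    have hcard := (hind (Module.finrank L F + 1)).fintype_card_le_finrank
    simp at hcard
  obtain ⟨k, hPk, hmin⟩ : ∃ k, P k ∧ ∀ j, j < k → ¬ P j := by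
    refine ⟨Nat.find hex, Nat.find_spec hex, fun j hj => Nat.find_min hex hj⟩
  have hkpos : 0 < k := by
    rcases Nat.eq_zero_or_pos k with h0 | h0
    · exfalso
      rw [h0] at hPk
      simp only [hPdef] at hPk
      rw [Set.range_eq_empty (fun i : Fin 0 => c ^ p ^ (i : ℕ)), Submodule.span_empty,
        Submodule.mem_bot, pow_zero, pow_one] at hPk
      exact hc hPk
    · exact h0
  obtain ⟨m, rfl⟩ : ∃ m, k = m + 1 := ⟨k - 1, by omega⟩
  obtain ⟨β', hβ'⟩ := (Submodule.mem_span_range_iff_exists_fun L).mp hPk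
  set β : ℕ → L := fun j => if hj : j < m + 1 then β' ⟨j, hj⟩ else 0 with hβdef
  have hsum : ∑ j ∈ Finset.range (m + 1), β j • c ^ p ^ j = c ^ p ^ (m + 1) := by
    rw [← hβ', ← Fin.sum_univ_eq_sum_range (fun j => β j • c ^ p ^ j) (m + 1)]
    exact Finset.sum_congr rfl fun i _ => by simp [hβdef, i.isLt]; intro h; exact absurd i.isLt (by omega)
  have hβ0 : β 0 ≠ 0 := by
    intro hβ0
    apply hmin m (by omega)
    have e1 : ∀ j ∈ Finset.range m,
        ((Classical.choose (h.frobSurj (β (j + 1)))) • c ^ p ^ j) ^ p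
        = β (j + 1) • c ^ p ^ (j + 1) := by
      intro j _
      rw [_root_.smul_pow, Classical.choose_spec (h.frobSurj (β (j + 1))), ← pow_mul, ← pow_succ]
    have hfrob : (∑ j ∈ Finset.range m,
        (Classical.choose (h.frobSurj (β (j + 1)))) • c ^ p ^ j) ^ p = (c ^ p ^ m) ^ p := by
      rw [sum_pow_char, Finset.sum_congr rfl e1, ← pow_mul, ← pow_succ, ← hsum,
        Finset.sum_range_succ']
      simp [hβ0]
    have heq : (∑ j ∈ Finset.range m,
        (Classical.choose (h.frobSurj (β (j + 1)))) • c ^ p ^ j) = c ^ p ^ m := by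
      apply frobenius_inj F p
      rw [frobenius_def, frobenius_def]
      exact hfrob
    simp only [hPdef]
    rw [← heq]
    apply Submodule.sum_smul_mem
    intro j hj
    apply Submodule.subset_span
    exact ⟨⟨j, Finset.mem_range.mp hj⟩, rfl⟩
  obtain ⟨z, hz⟩ := h.lemB (by omega : 0 < m + 1) hβ0
  simp only [Nat.add_sub_cancel] at hz
  set Y : ℕ → L := fun i => Nat.rec (β 0 * z ^ p - 1)
    (fun i Yi => Yi ^ p + β (i + 1) * z ^ p) i with hYdef
  have hY0 : Y 0 = β 0 * z ^ p - 1 := rfl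
  have hYs : ∀ i, Y (i + 1) = (Y i) ^ p + β (i + 1) * z ^ p := fun i => rfl
  have hYcf : ∀ i, Y i = (∑ j ∈ Finset.range (i + 1),
      (β j) ^ p ^ (i - j) * z ^ p ^ (i + 1 - j)) - 1 := by
    intro i
    induction i with
    | zero => simp [hY0]
    | succ i ih =>
      rw [hYs, ih, sub_pow_char, one_pow, sum_pow_char]
      have e1 : ∀ j ∈ Finset.range (i + 1),
          ((β j) ^ p ^ (i - j) * z ^ p ^ (i + 1 - j)) ^ p
          = (β j) ^ p ^ (i + 1 - j) * z ^ p ^ (i + 2 - j) := by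
        intro j hj
        have hj' : j ≤ i := by
          have := Finset.mem_range.mp hj; omega
        have h1 : p ^ (i - j) * p = p ^ (i + 1 - j) := by rw [← pow_succ]; congr 1; omega
        have h2 : p ^ (i + 1 - j) * p = p ^ (i + 2 - j) := by rw [← pow_succ]; congr 1; omega
        rw [mul_pow, ← pow_mul, ← pow_mul, h1, h2]
      rw [Finset.sum_congr rfl e1]
      rw [Finset.sum_range_succ (fun j => (β j) ^ p ^ (i + 1 - j) * z ^ p ^ (i + 2 - j)) (i + 1)]
      simp only [Nat.sub_self, pow_zero, pow_one, Nat.add_sub_cancel]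
      have h3 : i + 2 - (i + 1) = 1 := by omega
      rw [h3, pow_one]
      ring
  have hYk : Y m = z := by
    rw [hYcf m, hz]
    ring
  refine ⟨∑ i ∈ Finset.range (m + 1), Y i • c ^ p ^ i, ?_⟩
  have hyp : (∑ i ∈ Finset.range (m + 1), Y i • c ^ p ^ i) ^ p
      = ∑ i ∈ Finset.range (m + 1), (Y i ^ p) • c ^ p ^ (i + 1) := by
    rw [sum_pow_char]
    refine Finset.sum_congr rfl fun i _ => ?_
    rw [_root_.smul_pow, ← pow_mul, ← pow_succ]
  rw [hyp, Finset.sum_range_succ (fun i => (Y i ^ p) • c ^ p ^ (i + 1)) m, hYk, ← hsum,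
    Finset.smul_sum]
  rw [Finset.sum_range_succ' (fun i => (z ^ p) • (β i • c ^ p ^ i)) m,
    Finset.sum_range_succ' (fun i => Y i • c ^ p ^ i) m]
  have hterm : ∀ j, (Y j) ^ p • c ^ p ^ (j + 1) + z ^ p • (β (j + 1) • c ^ p ^ (j + 1))
      - Y (j + 1) • c ^ p ^ (j + 1) = 0 := by
    intro j
    rw [smul_smul, ← add_smul, ← sub_smul, hYs j]
    have e : Y j ^ p + z ^ p * β (j + 1) - (Y j ^ p + β (j + 1) * z ^ p) = 0 := by ring
    rw [e, zero_smul]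
  have h0term : z ^ p • (β 0 • c ^ p ^ 0) - Y 0 • c ^ p ^ 0 = c := by
    rw [smul_smul, ← sub_smul, hY0]
    have e : z ^ p * β 0 - (β 0 * z ^ p - 1) = 1 := by ring
    rw [e, one_smul, pow_zero, pow_one]
  have hsplit : ∑ j ∈ Finset.range m, Y j ^ p • c ^ p ^ (j + 1)
        + (∑ i ∈ Finset.range m, z ^ p • (β (i + 1) • c ^ p ^ (i + 1))
            + z ^ p • (β 0 • c ^ p ^ 0))
        - (∑ i ∈ Finset.range m, Y (i + 1) • c ^ p ^ (i + 1) + Y 0 • c ^ p ^ 0)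
      = ∑ j ∈ Finset.range m, ((Y j) ^ p • c ^ p ^ (j + 1)
          + z ^ p • (β (j + 1) • c ^ p ^ (j + 1)) - Y (j + 1) • c ^ p ^ (j + 1))
        + (z ^ p • (β 0 • c ^ p ^ 0) - Y 0 • c ^ p ^ 0) := by
    rw [Finset.sum_sub_distrib, Finset.sum_add_distrib]
    abel
  rw [hsplit, Finset.sum_congr rfl fun j _ => hterm j, h0term, Finset.sum_const_zero, zero_add]

theorem backward_dir (hp : p.Prime)
    (hext : ∀ (E : Type u) [Field E] [Algebra L E] [FiniteDimensional L E],
      ¬ (p ∣ Module.finrank L E)) : PC p L := by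
  haveI : Fact p.Prime := ⟨hp⟩
  -- L is perfect
  have hperf : ∀ u : L, ∃ x : L, x ^ p = u := by
    intro u
    by_contra hu
    push_neg at hu
    have hirr : Irreducible (X ^ p - C u : L[X]) :=
      X_pow_sub_C_irreducible_of_prime hp fun b hb => hu b hb
    haveI : Fact (Irreducible (X ^ p - C u : L[X])) := ⟨hirr⟩
    have hne : (X ^ p - C u : L[X]) ≠ 0 := hirr.ne_zero
    letI : Field (AdjoinRoot (X ^ p - C u : L[X])) := by infer_instance
    haveI : FiniteDimensional L (AdjoinRoot (X ^ p - C u : L[X])) :=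
      Module.Finite.of_basis (AdjoinRoot.powerBasis hne).basis
    apply hext (AdjoinRoot (X ^ p - C u : L[X]))
    rw [(AdjoinRoot.powerBasis hne).finrank, AdjoinRoot.powerBasis_dim, natDegree_X_pow_sub_C]
  haveI : PerfectRing L p := PerfectRing.ofSurjective L p fun u => hperf u
  haveI : PerfectField L := PerfectRing.toPerfectField L p
  intro n a b
  set Ω := AlgebraicClosure L
  set f : L[X] := X ^ p ^ n + (∑ i : Fin n, C (a i) * X ^ p ^ (i : ℕ)) + C b with hfdef
  have hpn : 0 < p ^ n := pow_pos hp.pos n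
  have hdegr : ((∑ i : Fin n, C (a i) * X ^ p ^ (i : ℕ)) + C b : L[X]).degree
      < ((p ^ n : ℕ) : WithBot ℕ) := by
    apply lt_of_le_of_lt (degree_add_le _ _)
    apply max_lt
    · apply lt_of_le_of_lt (degree_sum_le _ _)
      apply Finset.sup_lt_iff (by exact_mod_cast WithBot.bot_lt_coe _) |>.mpr
      intro i _
      apply lt_of_le_of_lt (degree_mul_le _ _)
      apply lt_of_le_of_lt (add_le_add degree_C_le (degree_X_pow _).le)
      rw [zero_add]
      exact_mod_cast Nat.pow_lt_pow_right hp.one_lt i.isLt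
    · apply lt_of_le_of_lt degree_C_le
      exact_mod_cast hpn
  have hdeg : f.degree = ((p ^ n : ℕ) : WithBot ℕ) := by
    rw [hfdef, add_assoc, degree_add_eq_left_of_degree_lt (by rwa [degree_X_pow]),
      degree_X_pow]
  have hdeg0 : f.degree ≠ 0 := by
    rw [hdeg]
    exact_mod_cast hpn.ne'
  obtain ⟨x, hx⟩ := IsAlgClosed.exists_aeval_eq_zero Ω f hdeg0
  have hxint : IsIntegral L x := Algebra.IsIntegral.isIntegral x
  haveI : FiniteDimensional L L⟮x⟯ := IntermediateField.adjoin.finiteDimensional hxint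
  set E := L⟮x⟯
  set d := Module.finrank L E with hddef
  have hpd : ¬ p ∣ d := hext E
  have hd0 : (d : L) ≠ 0 := by
    rw [Ne, CharP.cast_eq_zero_iff L p d]
    exact hpd
  set ξ : E := IntermediateField.AdjoinSimple.gen L x with hξdef
  have hξeval : (Polynomial.aeval ξ) f = 0 := by
    apply (algebraMap E Ω).injective
    rw [map_zero, ← Polynomial.aeval_algebraMap_apply]
    rw [IntermediateField.AdjoinSimple.algebraMap_gen]
    exact hx
  have heval : ξ ^ p ^ n + (∑ i : Fin n, algebraMap L E (a i) * ξ ^ p ^ (i : ℕ))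
      + algebraMap L E b = 0 := by
    simpa only [hfdef, map_add, map_sum, map_mul, map_pow, aeval_X, aeval_C] using hξeval
  -- trace commutes with Frobenius powers
  haveI : CharP Ω p := charP_of_injective_algebraMap (algebraMap L Ω).injective p
  haveI : Algebra.IsAlgebraic L E := Algebra.IsAlgebraic.of_finite L E
  haveI : Algebra.IsSeparable L E := inferInstance
  have hkey : ∀ (y : E) (mq : ℕ),
      Algebra.trace L E (y ^ p ^ mq) = (Algebra.trace L E y) ^ p ^ mq := by
    intro y mq
    have h1 : algebraMap L Ω (Algebra.trace L E (y ^ p ^ mq)) = ∑ σ : E →ₐ[L] Ω, σ (y ^ p ^ mq) :=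
      trace_eq_sum_embeddings Ω
    have h2 : algebraMap L Ω (Algebra.trace L E y) = ∑ σ : E →ₐ[L] Ω, σ y :=
      trace_eq_sum_embeddings Ω
    apply (algebraMap L Ω).injective
    rw [h1, RingHom.map_pow, h2, sum_pow_char_pow]
    exact Finset.sum_congr rfl fun σ _ => map_pow σ y (p ^ mq)
  set t := Algebra.trace L E ξ with htdef
  have htr : t ^ p ^ n + (∑ i : Fin n, a i * t ^ p ^ (i : ℕ)) + (d : L) * b = 0 := by
    have := congrArg (Algebra.trace L E) heval
    rw [map_zero, map_add, map_add, hkey] at this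
    rw [map_sum] at this
    have e1 : ∀ i : Fin n, Algebra.trace L E (algebraMap L E (a i) * ξ ^ p ^ (i : ℕ))
        = a i * t ^ p ^ (i : ℕ) := by
      intro i
      rw [← Algebra.smul_def, map_smul, hkey, smul_eq_mul]
    rw [Finset.sum_congr rfl fun i _ => e1 i] at this
    rw [Algebra.trace_algebraMap] at this
    rw [← this, hddef]
    simp [nsmul_eq_mul]
    rfl
  -- Fermat
  have hfermat : ∀ (r : ℕ) (mq : ℕ), ((r : L)) ^ p ^ mq = (r : L) := by
    have h1 : ∀ r : ℕ, ((r : L)) ^ p = (r : L) := by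
      intro r
      induction r with
      | zero => rw [Nat.cast_zero, zero_pow hp.ne_zero]
      | succ r ih => push_cast [add_pow_char, ih, one_pow]; ring
    intro r mq
    induction mq with
    | zero => rw [pow_zero, pow_one]
    | succ mq ih => rw [pow_succ, pow_mul, ih, h1]
  set z := (d : L)⁻¹ * t with hzdef
  have hzp : ∀ mq : ℕ, z ^ p ^ mq = (d : L)⁻¹ * t ^ p ^ mq := by
    intro mq
    rw [hzdef, mul_pow, inv_pow, hfermat d mq]
  refine ⟨z, ?_⟩
  have hsum2 : ∑ i : Fin n, a i * z ^ p ^ (i : ℕ)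
      = (d : L)⁻¹ * ∑ i : Fin n, a i * t ^ p ^ (i : ℕ) := by
    rw [Finset.mul_sum]
    exact Finset.sum_congr rfl fun i _ => by rw [hzp]; ring
  have htr' : t ^ p ^ n + (∑ i : Fin n, a i * t ^ p ^ (i : ℕ)) = -((d : L) * b) := by
    linear_combination htr
  rw [hzp n, hsum2, ← mul_add, htr', mul_neg, ← mul_assoc, inv_mul_cancel₀ hd0, one_mul,
    neg_add_cancel]

theorem PC.galoisAux (h : PC p L) (hp : p.Prime) (M : Type u) [Field M] [Algebra L M]
    [FiniteDimensional L M] [IsGalois L M] (hdvd2 : p ∣ Module.finrank L M) : False := by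
  classical
  haveI : Fact p.Prime := ⟨hp⟩
  haveI : CharP M p := charP_of_injective_algebraMap (algebraMap L M).injective p
  have hcardG : p ∣ Fintype.card (M ≃ₐ[L] M) := by
    rw [← Nat.card_eq_fintype_card, IsGalois.card_aut_eq_finrank]
    exact hdvd2
  obtain ⟨σ, hσ⟩ := exists_prime_orderOf_dvd_card p hcardG
  have hθ : ∃ θ : M, ∑ i ∈ Finset.range p, (σ ^ i) θ ≠ 0 := by
    by_contra hall
    push_neg at hall
    have hinj : Function.Injective
        (fun i : Fin p => ((σ ^ (i : ℕ)).toAlgHom.toRingHom.toMonoidHom : M →* M)) := by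
      intro i j hij
      have he : (σ ^ (i : ℕ) : M ≃ₐ[L] M) = σ ^ (j : ℕ) := by
        ext x
        exact DFunLike.congr_fun hij x
      have := pow_injOn_Iio_orderOf (x := σ) (by rw [hσ]; exact i.isLt)
        (by rw [hσ]; exact j.isLt) he
      exact Fin.ext this
    have hLI := (linearIndependent_monoidHom M M).comp
      (fun i : Fin p => ((σ ^ (i : ℕ)).toAlgHom.toRingHom.toMonoidHom : M →* M)) hinj
    have hzero : ∑ i : Fin p,
        (1 : M) • ⇑((σ ^ (i : ℕ)).toAlgHom.toRingHom.toMonoidHom : M →* M) = 0 := by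
      funext θ
      simp only [Finset.sum_apply, Pi.zero_apply, one_smul]
      have h2 := hall θ
      rw [← Fin.sum_univ_eq_sum_range (fun i => (σ ^ i) θ) p] at h2
      exact h2
    have := Fintype.linearIndependent_iff.mp hLI (fun _ => (1 : M)) hzero ⟨0, hp.pos⟩
    exact one_ne_zero this
  obtain ⟨θ, hs⟩ := hθ
  set s : M := ∑ i ∈ Finset.range p, (σ ^ i) θ with hsdef
  have hσpow : σ ^ p = 1 := by rw [← hσ]; exact pow_orderOf_eq_one σ
  obtain ⟨q, hq⟩ : ∃ q, p = q + 1 := ⟨p - 1, (Nat.succ_pred_eq_of_pos hp.pos).symm⟩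
  have hσq1 : σ ^ (q + 1) = 1 := by rw [← hq]; exact hσpow
  have hqcast : ((q : ℕ) : M) = -1 := by
    have h0 : ((p : ℕ) : M) = 0 := CharP.cast_eq_zero M p
    rw [hq] at h0
    push_cast at h0
    linear_combination h0
  have hσs : σ s = s := by
    rw [hsdef, map_sum]
    have e1 : ∀ i ∈ Finset.range p, σ ((σ ^ i) θ) = (σ ^ (i + 1)) θ := by
      intro i _
      rw [pow_succ']
      rfl
    rw [Finset.sum_congr rfl e1, hq, Finset.sum_range_succ (fun i => (σ ^ (i + 1)) θ) q,
      Finset.sum_range_succ' (fun i => (σ ^ i) θ) q, hσq1]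
    simp
  set A : M := ∑ i ∈ Finset.range p, ((i : ℕ) : M) * (σ ^ i) θ with hAdef
  have hσA : σ A = A - s := by
    rw [hAdef, map_sum]
    have e1 : ∀ i ∈ Finset.range p, σ (((i : ℕ) : M) * (σ ^ i) θ)
        = ((i : ℕ) : M) * (σ ^ (i + 1)) θ := by
      intro i _
      rw [map_mul, map_natCast, pow_succ']
      rfl
    have e2 : A - s = ∑ i ∈ Finset.range p, (((i : ℕ) : M) - 1) * (σ ^ i) θ := by
      rw [hAdef, hsdef, ← Finset.sum_sub_distrib]
      exact Finset.sum_congr rfl fun i _ => by ring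
    rw [Finset.sum_congr rfl e1, e2, hq,
      Finset.sum_range_succ (fun i => ((i : ℕ) : M) * (σ ^ (i + 1)) θ) q,
      Finset.sum_range_succ' (fun i => (((i : ℕ) : M) - 1) * (σ ^ i) θ) q, hσq1, hqcast]
    have e3 : ∀ i ∈ Finset.range q, ((((i + 1 : ℕ)) : M) - 1) * (σ ^ (i + 1)) θ
        = ((i : ℕ) : M) * (σ ^ (i + 1)) θ := by
      intro i _
      push_cast
      ring
    rw [Finset.sum_congr rfl e3]
    simp only [AlgEquiv.one_apply, pow_zero, Nat.cast_zero]
    ring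
  set α : M := -A * s⁻¹ with hαdef
  have hσα : σ α = α + 1 := by
    rw [hαdef, map_mul, map_neg, hσA, map_inv₀, hσs]
    have e : -(A - s) * s⁻¹ = -A * s⁻¹ + s * s⁻¹ := by ring
    rw [e, mul_inv_cancel₀ hs]
  set c : M := α ^ p - α with hcdef
  have hσc : σ c = c := by
    rw [hcdef, map_sub, map_pow, hσα, add_pow_char, one_pow]
    ring
  set F := IntermediateField.fixedField (Subgroup.zpowers σ) with hF
  have hσstab : σ ∈ MulAction.stabilizer (M ≃ₐ[L] M) c := by
    rw [MulAction.mem_stabilizer_iff]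
    exact hσc
  have hcF : c ∈ F := by
    rintro ⟨g, hg⟩
    exact Subgroup.zpowers_le.mpr hσstab hg
  haveI : FiniteDimensional L F := inferInstance
  obtain ⟨y, hy⟩ := h.asSurj hp F ⟨c, hcF⟩
  have hyM : (y : M) ^ p - (y : M) = c := by
    have h1 := congrArg Subtype.val hy
    push_cast at h1
    exact h1
  have hσy : σ (y : M) = (y : M) := y.2 ⟨σ, Subgroup.mem_zpowers σ⟩
  set x : M := α - (y : M) with hxdef
  have hxp : x ^ p = x := by
    rw [hxdef, sub_pow_char]
    linear_combination -hyM
  have hσx : σ x = x + 1 := by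
    rw [hxdef, map_sub, hσα, hσy]
    ring
  have hxT : ∃ i, i < p ∧ ((i : ℕ) : M) = x := by
    by_contra hnx
    push_neg at hnx
    set Q : M[X] := X ^ p - X with hQdef
    have hQd : Q.natDegree = p := by
      rw [hQdef, natDegree_sub_eq_left_of_natDegree_lt, natDegree_X_pow]
      rw [natDegree_X_pow, natDegree_X]
      exact hp.one_lt
    have hQ0 : Q ≠ 0 := fun h0 => by
      rw [h0, natDegree_zero] at hQd
      omega
    have hroot : ∀ u : M, u ^ p = u → u ∈ Q.roots := by
      intro u hu
      rw [mem_roots hQ0]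
      simp [hQdef, IsRoot, hu]
    set T : Finset M := insert x ((Finset.range p).image (Nat.cast : ℕ → M)) with hT
    have hTsub : T ⊆ Q.roots.toFinset := by
      intro u hu
      rw [Multiset.mem_toFinset]
      rw [hT, Finset.mem_insert] at hu
      rcases hu with rfl | hu
      · exact hroot _ hxp
      · obtain ⟨i, _, rfl⟩ := Finset.mem_image.mp hu
        exact hroot _ (cast_pow_char i)
    have hTcard : T.card = p + 1 := by
      rw [hT, Finset.card_insert_of_notMem, Finset.card_image_of_injOn, Finset.card_range]
      · rw [Finset.coe_range]
        exact CharP.natCast_injOn_Iio M p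
      · intro hmem
        obtain ⟨i, hi, hieq⟩ := Finset.mem_image.mp hmem
        exact hnx i (Finset.mem_range.mp hi) hieq
    have hc1 := Finset.card_le_card hTsub
    have hc2 := Multiset.toFinset_card_le Q.roots
    have hc3 := Q.card_roots'
    omega
  obtain ⟨i, _, hieq⟩ := hxT
  have hfix : σ x = x := by rw [← hieq, map_natCast]
  rw [hσx] at hfix
  have : (1 : M) = 0 := by linear_combination hfix
  exact one_ne_zero this

theorem forward_dir (h : PC p L) (hp : p.Prime) (E : Type u) [Field E] [Algebra L E]
    [FiniteDimensional L E] : ¬ (p ∣ Module.finrank L E) := by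
  intro hdvd
  haveI : Fact p.Prime := ⟨hp⟩
  haveI : PerfectRing L p := PerfectRing.ofSurjective L p fun u => h.frobSurj u
  haveI : PerfectField L := PerfectRing.toPerfectField L p
  set Ω := AlgebraicClosure E with hΩ
  haveI : Algebra.IsAlgebraic L E := Algebra.IsAlgebraic.of_finite L E
  haveI : Algebra.IsAlgebraic L Ω := Algebra.IsAlgebraic.trans L E Ω
  haveI : IsAlgClosure L Ω := ⟨inferInstance, inferInstance⟩
  set M := normalClosure L E Ω with hM
  haveI : FiniteDimensional L ↥M := inferInstance
  haveI : Algebra.IsAlgebraic L ↥M := Algebra.IsAlgebraic.of_finite L ↥M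
  haveI : Algebra.IsSeparable L ↥M := inferInstance
  haveI : Normal L ↥M := inferInstance
  haveI : IsGalois L ↥M := ⟨⟩
  have hdvd2 : p ∣ Module.finrank L ↥M := by
    have hmul : Module.finrank L E * Module.finrank E ↥M = Module.finrank L ↥M :=
      Module.finrank_mul_finrank L E ↥M
    exact hmul ▸ hdvd.mul_right _
  exact h.galoisAux hp ↥M hdvd2

end Aux

/-- A field `L` of characteristic `p > 0` is `p`-closed (every polynomial
`X^{pⁿ} + a_{n-1}X^{p^{n-1}} + ⋯ + a₁X^p + a₀X + b` has a root in `L`) if and only if `L`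
has no finite field extension of degree divisible by `p`. -/
theorem pClosed_iff_no_extension_of_degree_divisible_by_p
    {p : ℕ} (hp : p.Prime) {L : Type u} [Field L] [CharP L p] :
    (∀ (n : ℕ) (a : Fin n → L) (b : L),
        ∃ x : L, x ^ p ^ n + (∑ i : Fin n, a i * x ^ p ^ (i : ℕ)) + b = 0) ↔
      ∀ (E : Type u) [Field E] [Algebra L E] [FiniteDimensional L E],
        ¬ (p ∣ Module.finrank L E) := by
  constructor
  · intro hpc E _ _ _
    exact forward_dir hpc hp E
  · intro hext
    exact backward_dir hp hext
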